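/- Let (E,ℒ) be a labeled graph satisfying the standing assumptions with ℰ the smallest normal accommodating set, and suppose (E,ℒ,ℰ) is strongly cofinal. Suppose there exist a vertex w ∈ E⁰, a strictly increasing sequence l₁ < l₂ < ⋯ of positive integers, and paths β_i ∈ ℒ*(E) such that (β_i, [w]_{l_i}) is a loop for every i ≥ 1. Then for every generalized vertex [v]_l there exist an index i ≥ 1 and a path δ ∈ ℒ*(E) with [w]_{l_i} ⊆ r([v]_l, δ); in particular, every vertex connects to a loop. -/
import Mathlib


/-- The `n`-fold concatenation (power) `w^n` of a finite word `w`. -/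
def wpow {Λ : Type*} (w : List Λ) (n : ℕ) : List Λ := (List.replicate n w).flatten

/-- The finite word `x_{[1,n]}` formed by the first `n` letters of an infinite word `x`. -/
def wordPrefix {Λ : Type*} (x : ℕ → Λ) (n : ℕ) : List Λ := (List.range n).map x

/-- A labeled graph `(E, ℒ)`: a directed graph with vertex set `V` and edge type `Edge`
(with range and source maps), together with a surjective labeling map `lbl` onto the
alphabet `Λ`. -/
structure LabeledGraph (V : Type*) (Λ : Type*) where
  Edge : Type*
  src : Edge → V
  rng : Edge → V
  lbl : Edge → Λ
  lbl_surjective : Function.Surjective lbl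

namespace LabeledGraph

variable {V : Type*} {Λ : Type*}

/-- `G.PathLabel u w α` holds iff there is a finite path `λ` of length `≥ 1` in the graph
with source `u`, range `w` and label word `ℒ(λ) = α`. -/
inductive PathLabel (G : LabeledGraph V Λ) : V → V → List Λ → Prop
  | single (e : G.Edge) : PathLabel G (G.src e) (G.rng e) [G.lbl e]
  | cons (e : G.Edge) {w : V} {α : List Λ} :
      PathLabel G (G.rng e) w α → PathLabel G (G.src e) w (G.lbl e :: α)

variable (G : LabeledGraph V Λ)

/-- `α ∈ ℒ*(E)`: `α` is the label of some path of length `≥ 1`. -/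
def IsLabel (α : List Λ) : Prop := ∃ u w, G.PathLabel u w α

/-- The relative range `r(A, α)` of `α` with respect to `A`. -/
def rel (A : Set V) (α : List Λ) : Set V := {w | ∃ u ∈ A, G.PathLabel u w α}

/-- `r(α) = r(E⁰, α)`. -/
def range' (α : List Λ) : Set V := G.rel Set.univ α

/-- `s(α)`: the set of sources of paths labeled `α`. -/
def srcSet (α : List Λ) : Set V := {u | ∃ w, G.PathLabel u w α}

/-- `ℒ(AEⁿ)`: labels of paths of length `n` with source in `A`. -/
def lblFrom (A : Set V) (n : ℕ) : Set (List Λ) :=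
  {α | α.length = n ∧ ∃ u ∈ A, ∃ w, G.PathLabel u w α}

/-- `ℒ(AE^{≥1})`: labels of paths of length `≥ 1` with source in `A`. -/
def lblFromGe (A : Set V) : Set (List Λ) := {α | ∃ u ∈ A, ∃ w, G.PathLabel u w α}

/-- `ℒ(EⁿA)`: labels of paths of length `n` with range in `A`. -/
def lblTo (A : Set V) (n : ℕ) : Set (List Λ) :=
  {α | α.length = n ∧ ∃ u, ∃ w ∈ A, G.PathLabel u w α}

/-- The generalized vertex `[v]_l`: the set of vertices `w` receiving at least one edge
such that `ℒ(E^k w) = ℒ(E^k v)` for all `1 ≤ k ≤ l`. -/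
def gv (v : V) (l : ℕ) : Set V :=
  {w | (∃ e : G.Edge, G.rng e = w) ∧
    ∀ k : ℕ, 1 ≤ k → k ≤ l → G.lblTo {w} k = G.lblTo {v} k}

/-- Membership in `ℰ`, the smallest collection of subsets of `E⁰` containing all ranges
`r(α)` and closed under relative ranges, finite intersections, finite unions and
relative complements (the smallest normal accommodating set). -/
inductive memE : Set V → Prop
  | empty : memE ∅
  | range (α : List Λ) : α ≠ [] → memE (G.range' α)
  | relRange {A : Set V} (α : List Λ) : α ≠ [] → memE A → memE (G.rel A α)
  | inter {A C : Set V} : memE A → memE C → memE (A ∩ C)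
  | union {A C : Set V} : memE A → memE C → memE (A ∪ C)
  | diff {A C : Set V} : memE A → memE C → memE (A \ C)

/-- The standing assumptions on the labeled space `(E, ℒ, ℰ)`: the graph has no sinks and
the labeled space is weakly left-resolving, set-finite and receiver set-finite. -/
structure Standing : Prop where
  no_sinks : ∀ u : V, ∃ e : G.Edge, G.src e = u
  weakly_left_resolving : ∀ A C : Set V, G.memE A → G.memE C →
    ∀ α : List Λ, α ≠ [] → G.rel (A ∩ C) α = G.rel A α ∩ G.rel C α
  set_finite : ∀ A : Set V, G.memE A → ∀ k : ℕ, 1 ≤ k → (G.lblFrom A k).Finite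
  receiver_set_finite : ∀ A : Set V, G.memE A → ∀ k : ℕ, 1 ≤ k → (G.lblTo A k).Finite

/-- `α` is agreeable for `[v]_l` (the condition only depends on `l`):
`α = βα' = α'γ` with `α', β, γ ∈ ℒ*(E)` and `|β| = |γ| ≤ l`. -/
def Agreeable (l : ℕ) (α : List Λ) : Prop :=
  ∃ α' β γ : List Λ, G.IsLabel α' ∧ G.IsLabel β ∧ G.IsLabel γ ∧
    β.length = γ.length ∧ β.length ≤ l ∧ α = β ++ α' ∧ α = α' ++ γ

/-- `α` (a path with `s(α) ∩ [v]_l ≠ ∅`) is disagreeable for `[v]_l`. -/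
def DisagreeableFor (v : V) (l : ℕ) (α : List Λ) : Prop :=
  (G.srcSet α ∩ G.gv v l).Nonempty ∧ ¬ G.Agreeable l α

/-- The generalized vertex `[v]_l` is disagreeable: there is `N ≥ 1` such that for every
`n > N` there is a path in `ℒ(E^{≥n})` which is disagreeable for `[v]_l`. -/
def DisagreeableGV (v : V) (l : ℕ) : Prop :=
  ∃ N : ℕ, 1 ≤ N ∧ ∀ n : ℕ, N < n →
    ∃ α : List Λ, n ≤ α.length ∧ G.DisagreeableFor v l α

/-- The labeled space `(E, ℒ, ℰ)` is disagreeable. -/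
def Disagreeable : Prop :=
  ∀ v : V, ∃ L : ℕ, 1 ≤ L ∧ ∀ l : ℕ, L ≤ l → G.DisagreeableGV v l

/-- `(α, A)` is a loop: `A ∈ ℰ` is nonempty, `α ∈ ℒ*(E)` and `A ⊆ r(A, α)`. -/
def IsLoop (α : List Λ) (A : Set V) : Prop :=
  α ≠ [] ∧ G.memE A ∧ A.Nonempty ∧ A ⊆ G.rel A α

/-- The loop `(α, A)` has an exit: either (i) there is `β ∈ ℒ(AE^{|α|})` with `β ≠ α` and
`r(A, β) ≠ ∅`, or (ii) `A ⊊ r(A, α)`. -/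
def HasExit (α : List Λ) (A : Set V) : Prop :=
  (∃ β : List Λ, β ∈ G.lblFrom A α.length ∧ β ≠ α ∧ (G.rel A β).Nonempty) ∨
    A ⊂ G.rel A α

/-- `A ∈ ℰ` is minimal: `A ≠ ∅` and `A ∩ C ∈ {A, ∅}` for every `C ∈ ℰ`. -/
def MinimalSet (A : Set V) : Prop :=
  G.memE A ∧ A.Nonempty ∧ ∀ C : Set V, G.memE C → A ∩ C = A ∨ A ∩ C = ∅

/-- A set `Bset ⊆ E⁰` connects to a loop: there are a loop `(α, A)` and finitely many
paths `δ₁, …, δ_m ∈ ℒ*(E)`, none of which is an initial path of another, with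
`A ⊆ ∪ᵢ r(Bset, δᵢ)`. -/
def ConnectsToLoop (Bset : Set V) : Prop :=
  ∃ (α : List Λ) (A : Set V), G.IsLoop α A ∧
    ∃ (m : ℕ) (δ : Fin m → List Λ), (∀ i, G.IsLabel (δ i)) ∧
      (∀ i j, i ≠ j → ¬ (δ i <+: δ j)) ∧ A ⊆ ⋃ i, G.rel Bset (δ i)

/-- Every vertex connects to a loop: every generalized vertex `[v]_l` connects to a loop. -/
def EveryVertexConnectsToLoop : Prop :=
  ∀ (v : V) (l : ℕ), 1 ≤ l → (∃ e : G.Edge, G.rng e = v) →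
    G.ConnectsToLoop (G.gv v l)

/-- The labeled space `(E, ℒ, ℰ)` is strongly cofinal. -/
def StronglyCofinal : Prop :=
  ∀ x : ℕ → Λ, (∀ n : ℕ, 1 ≤ n → G.IsLabel (wordPrefix x n)) →
    ∀ (v : V) (l : ℕ), (∃ e : G.Edge, G.rng e = v) → 1 ≤ l →
      ∃ N : ℕ, 1 ≤ N ∧ ∃ (m : ℕ) (lam : Fin m → List Λ),
        (∀ i, G.IsLabel (lam i)) ∧
        G.range' (wordPrefix x N) ⊆ ⋃ i, G.rel (G.gv v l) (lam i)

/-- A subset `H ⊆ ℰ` is hereditary: it is closed under finite unions, relative ranges,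
and subsets belonging to `ℰ`. -/
def IsHereditary (H : Set (Set V)) : Prop :=
  (∀ A ∈ H, G.memE A) ∧
  (∀ A ∈ H, ∀ C ∈ H, A ∪ C ∈ H) ∧
  (∀ A ∈ H, ∀ β : List Λ, G.IsLabel β → G.rel A β ∈ H) ∧
  (∀ A ∈ H, ∀ C : Set V, G.memE C → C ⊆ A → C ∈ H)

/-- A subset `H ⊆ ℰ` is saturated: every `A ∈ ℰ` with `r(A, β) ∈ H` for all
`β ∈ ℒ*(E)` belongs to `H`. -/
def IsSaturated (H : Set (Set V)) : Prop :=
  ∀ A : Set V, G.memE A → (∀ β : List Λ, G.IsLabel β → G.rel A β ∈ H) → A ∈ H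

end LabeledGraph

section Aux

open LabeledGraph

variable {V : Type*} {Λ : Type*} (G : LabeledGraph V Λ)

lemma PathLabel_ne_nil {u w : V} {α : List Λ} (h : G.PathLabel u w α) : α ≠ [] := by
  cases h <;> simp

lemma PathLabel_append {u z w : V} {α γ : List Λ} (h1 : G.PathLabel u z α)
    (h2 : G.PathLabel z w γ) : G.PathLabel u w (α ++ γ) := by
  induction h1 with
  | single e => exact .cons e h2
  | cons e _ ih => exact .cons e (ih h2)

lemma PathLabel_rng_edge {u w : V} {α : List Λ} (h : G.PathLabel u w α) :
    ∃ e, G.rng e = w := by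
  induction h with
  | single e => exact ⟨e, rfl⟩
  | cons _ _ ih => exact ih

lemma PathLabel_split {α γ : List Λ} (hα : α ≠ []) (hγ : γ ≠ []) :
    ∀ {u w : V}, G.PathLabel u w (α ++ γ) →
      ∃ z, G.PathLabel u z α ∧ G.PathLabel z w γ := by
  induction α with
  | nil => exact absurd rfl hα
  | cons a α' ih =>
    intro u w h
    rw [List.cons_append] at h
    obtain ⟨rest, hrest, h⟩ : ∃ rest, rest = α' ++ γ ∧ G.PathLabel u w (a :: rest) :=
      ⟨_, rfl, h⟩
    cases h with
    | single e =>
      exact absurd (List.append_eq_nil_iff.mp hrest.symm).2 hγ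
    | cons e h' =>
      subst hrest
      by_cases hα' : α' = []
      · subst hα'
        exact ⟨G.rng e, .single e, h'⟩
      · obtain ⟨z, q1, q2⟩ := ih hα' h'
        exact ⟨z, .cons e q1, q2⟩

lemma rel_mono {A B : Set V} (h : A ⊆ B) (α : List Λ) : G.rel A α ⊆ G.rel B α := by
  rintro y ⟨s, hs, p⟩; exact ⟨s, h hs, p⟩

lemma rel_empty (α : List Λ) : G.rel (∅ : Set V) α = ∅ := by
  ext y; simp [LabeledGraph.rel]

lemma rel_union (A B : Set V) (α : List Λ) :
    G.rel (A ∪ B) α = G.rel A α ∪ G.rel B α := by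
  ext y
  simp only [LabeledGraph.rel, Set.mem_union, Set.mem_setOf_eq]
  constructor
  · rintro ⟨s, hs | hs, p⟩
    · exact Or.inl ⟨s, hs, p⟩
    · exact Or.inr ⟨s, hs, p⟩
  · rintro (⟨s, hs, p⟩ | ⟨s, hs, p⟩)
    · exact ⟨s, Or.inl hs, p⟩
    · exact ⟨s, Or.inr hs, p⟩

lemma rel_comp (A : Set V) {α γ : List Λ} (hα : α ≠ []) (hγ : γ ≠ []) :
    G.rel (G.rel A α) γ = G.rel A (α ++ γ) := by
  ext y
  constructor
  · rintro ⟨z, ⟨s, hs, p1⟩, p2⟩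
    exact ⟨s, hs, PathLabel_append G p1 p2⟩
  · rintro ⟨s, hs, p⟩
    obtain ⟨z, p1, p2⟩ := PathLabel_split G hα hγ p
    exact ⟨z, ⟨s, hs, p1⟩, p2⟩

lemma mem_range'_iff {y : V} {ξ : List Λ} :
    y ∈ G.range' ξ ↔ ξ ∈ G.lblTo {y} ξ.length := by
  simp [LabeledGraph.range', LabeledGraph.rel, LabeledGraph.lblTo]

lemma gv_mono {v : V} {t t' : ℕ} (h : t ≤ t') : G.gv v t' ⊆ G.gv v t := by
  rintro y ⟨h1, h2⟩
  exact ⟨h1, fun k hk1 hk2 => h2 k hk1 (hk2.trans h)⟩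

/-- Intersection of a list of sets with a base set. -/
def interList (f : List Λ → Set V) (base : Set V) : List (List Λ) → Set V
  | [] => base
  | γ :: L => f γ ∩ interList f base L

/-- Union of a list of sets. -/
def unionList (f : List Λ → Set V) : List (List Λ) → Set V
  | [] => ∅
  | γ :: L => f γ ∪ unionList f L

lemma mem_interList {f : List Λ → Set V} {base : Set V} {L : List (List Λ)} {y : V} :
    y ∈ interList f base L ↔ y ∈ base ∧ ∀ γ ∈ L, y ∈ f γ := by
  induction L with
  | nil => simp [interList]
  | cons γ L ih => simp [interList, ih, List.mem_cons]; tauto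

lemma mem_unionList {f : List Λ → Set V} {L : List (List Λ)} {y : V} :
    y ∈ unionList f L ↔ ∃ γ ∈ L, y ∈ f γ := by
  induction L with
  | nil => simp [unionList]
  | cons γ L ih => simp [unionList, ih, List.mem_cons]

lemma memE_interList {f : List Λ → Set V} {base : Set V} {L : List (List Λ)}
    (hbase : G.memE base) (hf : ∀ γ ∈ L, G.memE (f γ)) :
    G.memE (interList f base L) := by
  induction L with
  | nil => exact hbase
  | cons γ L ih =>
    exact (hf γ (by simp)).inter (ih fun γ' h => hf γ' (by simp [h]))

lemma memE_unionList {f : List Λ → Set V} {L : List (List Λ)}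
    (hf : ∀ γ ∈ L, G.memE (f γ)) : G.memE (unionList f L) := by
  induction L with
  | nil => exact .empty
  | cons γ L ih =>
    exact (hf γ (by simp)).union (ih fun γ' h => hf γ' (by simp [h]))

lemma rel_interList (wlr : ∀ A C : Set V, G.memE A → G.memE C →
      ∀ α : List Λ, α ≠ [] → G.rel (A ∩ C) α = G.rel A α ∩ G.rel C α)
    {f : List Λ → Set V} {base : Set V} {L : List (List Λ)} {δ : List Λ}
    (hδ : δ ≠ []) (hbase : G.memE base) (hf : ∀ γ ∈ L, G.memE (f γ)) :
    G.rel (interList f base L) δ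
      = interList (fun γ => G.rel (f γ) δ) (G.rel base δ) L := by
  induction L with
  | nil => rfl
  | cons γ L ih =>
    have h1 : G.memE (f γ) := hf γ (by simp)
    have h2 : G.memE (interList f base L) :=
      memE_interList G hbase fun γ' h => hf γ' (by simp [h])
    show G.rel (f γ ∩ interList f base L) δ = _
    rw [wlr _ _ h1 h2 δ hδ, ih fun γ' h => hf γ' (by simp [h])]
    rfl

lemma rel_unionList {f : List Λ → Set V} {L : List (List Λ)} {δ : List Λ} :
    G.rel (unionList f L) δ = unionList (fun γ => G.rel (f γ) δ) L := by
  induction L with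
  | nil => exact rel_empty G δ
  | cons γ L ih =>
    show G.rel (f γ ∪ unionList f L) δ = _
    rw [rel_union, ih]
    rfl

lemma interList_congr {f g : List Λ → Set V} {base base' : Set V} {L : List (List Λ)}
    (hb : base = base') (hfg : ∀ γ ∈ L, f γ = g γ) :
    interList f base L = interList g base' L := by
  induction L with
  | nil => exact hb
  | cons γ L ih =>
    show f γ ∩ _ = g γ ∩ _
    rw [hfg γ (by simp), ih fun γ' h => hfg γ' (by simp [h])]

lemma unionList_congr {f g : List Λ → Set V} {L : List (List Λ)}
    (hfg : ∀ γ ∈ L, f γ = g γ) : unionList f L = unionList g L := by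
  induction L with
  | nil => rfl
  | cons γ L ih =>
    show f γ ∪ _ = g γ ∪ _
    rw [hfg γ (by simp), ih fun γ' h => hfg γ' (by simp [h])]

lemma wpow_zero (w : List Λ) : wpow w 0 = [] := rfl

lemma wpow_succ (w : List Λ) (n : ℕ) : wpow w (n + 1) = w ++ wpow w n := by
  simp [wpow, List.replicate_succ]

lemma wpow_succ' (w : List Λ) (n : ℕ) : wpow w (n + 1) = wpow w n ++ w := by
  simp [wpow, List.replicate_succ']

lemma wpow_length (w : List Λ) (n : ℕ) : (wpow w n).length = n * w.length := by
  induction n with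
  | zero => simp [wpow_zero]
  | succ n ih => rw [wpow_succ, List.length_append, ih, Nat.succ_mul]; omega

lemma wpow_getElem (w : List Λ) (hw : w ≠ []) (k i : ℕ) (h : i < (wpow w k).length) :
    (wpow w k)[i] = w[i % w.length]'(Nat.mod_lt i (List.length_pos_iff.mpr hw)) := by
  induction k generalizing i with
  | zero => simp [wpow_zero] at h
  | succ k ih =>
    have hlen : (wpow w (k + 1)) = w ++ wpow w k := wpow_succ w k
    rcases lt_or_ge i w.length with hi | hi
    · have : (wpow w (k+1))[i] = w[i] := by
        simp only [hlen]
        exact List.getElem_append_left hi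
      rw [this]
      congr 1
      exact (Nat.mod_eq_of_lt hi).symm
    · have h2 : i - w.length < (wpow w k).length := by
        have h' : i < k * w.length + w.length := by
          have hh := h; rw [wpow_length, Nat.succ_mul] at hh; exact hh
        rw [wpow_length]
        omega
      have : (wpow w (k+1))[i] = (wpow w k)[i - w.length] := by
        simp only [hlen]
        rw [List.getElem_append_right hi]
      rw [this, ih _ h2]
      congr 1
      conv_rhs => rw [Nat.mod_eq_sub_mod hi]

lemma wordPrefix_eq_take (x : ℕ → Λ) (w : List Λ) (hw : w ≠ [])
    (hx : ∀ i (h : i % w.length < w.length), x i = w[i % w.length])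
    (k n : ℕ) (hn : n ≤ k * w.length) :
    wordPrefix x n = (wpow w k).take n := by
  apply List.ext_getElem
  · simp [wordPrefix, wpow_length]; omega
  · intro i h1 h2
    have hi : i < n := by simpa [wordPrefix] using h1
    have hiw : i < (wpow w k).length := by rw [wpow_length]; omega
    simp only [wordPrefix, List.getElem_map, List.getElem_range, List.getElem_take]
    rw [hx i (Nat.mod_lt i (List.length_pos_iff.mpr hw)), wpow_getElem w hw k i hiw]

lemma loop_iter {A : Set V} {α : List Λ} (hA : A ⊆ G.rel A α) :
    ∀ k, 1 ≤ k → ∀ a ∈ A, ∃ s ∈ A, G.PathLabel s a (wpow α k) := by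
  intro k hk
  induction k with
  | zero => omega
  | succ k ih =>
    intro a ha
    rcases Nat.eq_or_lt_of_le hk with h1 | h1
    · obtain ⟨s, hs, p⟩ := hA ha
      refine ⟨s, hs, ?_⟩
      have : wpow α 1 = α := by rw [wpow_succ, wpow_zero, List.append_nil]
      rw [← h1, this]
      exact p
    · obtain ⟨a₁, ha₁, p⟩ := hA ha
      obtain ⟨s, hs, q⟩ := ih (by omega) a₁ ha₁
      exact ⟨s, hs, wpow_succ' α k ▸ PathLabel_append G q p⟩

lemma rel_range' {γ δ : List Λ} (hγ : γ ≠ []) (hδ : δ ≠ []) :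
    G.rel (G.range' γ) δ = G.range' (γ ++ δ) :=
  rel_comp G Set.univ hγ hδ

/-- The key transfer lemma: membership in `r([v]_l, δ)` only depends on the sets
`ℒ(Eᵏ u)` for `1 ≤ k ≤ l + |δ|`. -/
lemma key_transfer (hS : G.Standing) {v : V} (e₀ : G.Edge) (he₀ : G.rng e₀ = v)
    {l : ℕ} (hl : 1 ≤ l) {δ : List Λ} (hδ : δ ≠ []) {u u' : V}
    (huu' : ∀ k, 1 ≤ k → k ≤ l + δ.length → G.lblTo {u} k = G.lblTo {u'} k)
    (hu : u ∈ G.rel (G.gv v l) δ) : u' ∈ G.rel (G.gv v l) δ := by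
  classical
  set c0 : List Λ := [G.lbl e₀] with hc0def
  have hc0ne : c0 ≠ [] := by simp [hc0def]
  have hc0len : c0.length = 1 := by simp [hc0def]
  have hc0mem : c0 ∈ G.lblTo {v} 1 :=
    ⟨hc0len, G.src e₀, v, rfl, he₀ ▸ LabeledGraph.PathLabel.single e₀⟩
  have hvmemR : v ∈ G.range' c0 :=
    ⟨G.src e₀, trivial, he₀ ▸ LabeledGraph.PathLabel.single e₀⟩
  have hc0E : G.memE (G.range' c0) := LabeledGraph.memE.range c0 hc0ne
  -- the "good" words
  set Tall : Set (List Λ) :=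
    {γ | 1 ≤ γ.length ∧ γ.length ≤ l ∧ γ ∈ G.lblTo {v} γ.length} with hTalldef
  have hTfin : Tall.Finite := by
    refine Set.Finite.subset (Set.Finite.biUnion (Finset.Icc 1 l).finite_toSet
      (fun k hk => hS.receiver_set_finite _ hc0E k
        (Finset.mem_Icc.mp (Finset.mem_coe.mp hk)).1)) ?_
    · intro γ hγ
      obtain ⟨h1, h2, hlen, s, t, ht, p⟩ := hγ
      refine Set.mem_biUnion (Finset.mem_coe.mpr (Finset.mem_Icc.mpr ⟨h1, h2⟩)) ?_
      exact ⟨hlen, s, t, Set.mem_singleton_iff.mp ht ▸ hvmemR, p⟩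
  set L : List (List Λ) := hTfin.toFinset.toList with hLdef
  have hLmem : ∀ γ, γ ∈ L ↔ γ ∈ Tall := fun γ => by
    simp [hLdef, Finset.mem_toList, Set.Finite.mem_toFinset]
  have hLne : ∀ γ ∈ L, γ ≠ [] := by
    intro γ h he
    have := ((hLmem γ).1 h).1
    simp [he] at this
  set C : Set V := interList G.range' (G.range' c0) L with hCdef
  have hCE : G.memE C :=
    memE_interList G hc0E fun γ h => LabeledGraph.memE.range γ (hLne γ h)
  have hmemC : ∀ y, y ∈ C ↔ (y ∈ G.range' c0 ∧ ∀ γ ∈ Tall, y ∈ G.range' γ) := by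
    intro y
    rw [hCdef, mem_interList]
    exact ⟨fun ⟨h1, h2⟩ => ⟨h1, fun γ hγ => h2 γ ((hLmem γ).2 hγ)⟩,
      fun ⟨h1, h2⟩ => ⟨h1, fun γ hγ => h2 γ ((hLmem γ).1 hγ)⟩⟩
  -- the "bad" words
  set Bad : Set (List Λ) :=
    {η | 1 ≤ η.length ∧ η.length ≤ l ∧ η ∈ G.lblTo C η.length ∧
      η ∉ G.lblTo {v} η.length} with hBaddef
  have hBfin : Bad.Finite := by
    refine Set.Finite.subset (Set.Finite.biUnion (Finset.Icc 1 l).finite_toSet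
      (fun k hk => hS.receiver_set_finite _ hCE k
        (Finset.mem_Icc.mp (Finset.mem_coe.mp hk)).1)) ?_
    · intro η hη
      obtain ⟨h1, h2, h3, _⟩ := hη
      exact Set.mem_biUnion (Finset.mem_coe.mpr (Finset.mem_Icc.mpr ⟨h1, h2⟩)) h3
  set LB : List (List Λ) := hBfin.toFinset.toList with hLBdef
  have hLBmem : ∀ η, η ∈ LB ↔ η ∈ Bad := fun η => by
    simp [hLBdef, Finset.mem_toList, Set.Finite.mem_toFinset]
  have hLBne : ∀ η ∈ LB, η ≠ [] := by
    intro η h he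
    have := ((hLBmem η).1 h).1
    simp [he] at this
  set D : Set V := unionList G.range' LB with hDdef
  have hDE : G.memE D :=
    memE_unionList G fun η h => LabeledGraph.memE.range η (hLBne η h)
  have hmemD : ∀ y, y ∈ D ↔ ∃ η ∈ Bad, y ∈ G.range' η := by
    intro y
    rw [hDdef, mem_unionList]
    exact ⟨fun ⟨η, hη, h⟩ => ⟨η, (hLBmem η).1 hη, h⟩,
      fun ⟨η, hη, h⟩ => ⟨η, (hLBmem η).2 hη, h⟩⟩
  -- the generalized vertex is C \ D
  have hgv : G.gv v l = C \ D := by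
    ext y
    constructor
    · rintro ⟨hrec, hlbl⟩
      refine ⟨(hmemC y).2 ⟨?_, ?_⟩, ?_⟩
      · have hmem : c0 ∈ G.lblTo {y} 1 := (hlbl 1 le_rfl hl).symm ▸ hc0mem
        obtain ⟨_, s, t, ht, p⟩ := hmem
        exact ⟨s, trivial, Set.mem_singleton_iff.mp ht ▸ p⟩
      · rintro γ ⟨h1, h2, h3⟩
        have hmem : γ ∈ G.lblTo {y} γ.length := (hlbl γ.length h1 h2).symm ▸ h3
        obtain ⟨_, s, t, ht, p⟩ := hmem
        exact ⟨s, trivial, Set.mem_singleton_iff.mp ht ▸ p⟩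
      · intro hyD
        obtain ⟨η, ⟨h1, h2, _, h4⟩, s, _, p⟩ := (hmemD y).1 hyD
        exact h4 ((hlbl η.length h1 h2) ▸ (⟨rfl, s, y, rfl, p⟩ : η ∈ G.lblTo {y} η.length))
    · rintro ⟨hyC, hyD⟩
      obtain ⟨s0, _, p0⟩ := ((hmemC y).1 hyC).1
      refine ⟨PathLabel_rng_edge G p0, ?_⟩
      intro k hk1 hk2
      ext γ
      constructor
      · rintro ⟨hγlen, s, t, ht, p⟩
        have hty : t = y := Set.mem_singleton_iff.mp ht
        by_contra hγv
        have hγBad : γ ∈ Bad := by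
          refine ⟨by omega, by omega, ⟨rfl, s, y, hyC, hty ▸ p⟩, ?_⟩
          rw [hγlen]; exact hγv
        exact hyD ((hmemD y).2 ⟨γ, hγBad, s, trivial, hty ▸ p⟩)
      · intro hγv
        have hγT : γ ∈ Tall := by
          refine ⟨?_, ?_, ?_⟩
          · rw [hγv.1]; exact hk1
          · rw [hγv.1]; exact hk2
          · rw [hγv.1]; exact hγv
        obtain ⟨s, _, p⟩ := ((hmemC y).1 hyC).2 γ hγT
        exact ⟨hγv.1, s, y, rfl, p⟩
  -- relative ranges of C and D
  have hrelC : G.rel C δ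
      = interList (fun γ => G.range' (γ ++ δ)) (G.range' (c0 ++ δ)) L := by
    rw [hCdef, rel_interList G hS.weakly_left_resolving hδ hc0E
      (fun γ h => LabeledGraph.memE.range γ (hLne γ h))]
    exact interList_congr (rel_range' G hc0ne hδ) fun γ h => rel_range' G (hLne γ h) hδ
  have hrelD : G.rel D δ = unionList (fun η => G.range' (η ++ δ)) LB := by
    rw [hDdef, rel_unionList]
    exact unionList_congr fun η h => rel_range' G (hLBne η h) hδ
  -- rel of a difference
  have hdiff : G.rel (C \ D) δ = G.rel C δ \ G.rel D δ := by
    have hdisj : G.rel (C \ D) δ ∩ G.rel D δ = ∅ := by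
      rw [← hS.weakly_left_resolving (C \ D) D (hCE.diff hDE) hDE δ hδ,
        Set.diff_inter_self, rel_empty]
    apply Set.Subset.antisymm
    · intro y hy
      exact ⟨rel_mono G Set.diff_subset δ hy,
        fun hyD => Set.eq_empty_iff_forall_notMem.mp hdisj y ⟨hy, hyD⟩⟩
    · rintro y ⟨hyC, hyD⟩
      have hmem : y ∈ G.rel ((C \ D) ∪ (C ∩ D)) δ := by
        rw [Set.diff_union_inter]; exact hyC
      rw [rel_union] at hmem
      rcases hmem with h | h
      · exact h
      · exact absurd (rel_mono G Set.inter_subset_right δ h) hyD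
  -- the membership transfer
  have hδlen : 1 ≤ δ.length := List.length_pos_iff.mpr hδ
  have htr : ∀ ξ : List Λ, 1 ≤ ξ.length → ξ.length ≤ l →
      (u ∈ G.range' (ξ ++ δ) ↔ u' ∈ G.range' (ξ ++ δ)) := by
    intro ξ h1 h2
    rw [mem_range'_iff, mem_range'_iff,
      huu' (ξ ++ δ).length (by simp; omega) (by simp; omega)]
  rw [hgv, hdiff] at hu ⊢
  obtain ⟨huC, huD⟩ := hu
  constructor
  · rw [hrelC, mem_interList] at huC ⊢
    refine ⟨(htr c0 (by omega) hl).1 huC.1, fun γ hγ => ?_⟩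
    have hT := (hLmem γ).1 hγ
    exact (htr γ hT.1 hT.2.1).1 (huC.2 γ hγ)
  · intro h
    apply huD
    rw [hrelD, mem_unionList] at h ⊢
    obtain ⟨η, hη, hmem⟩ := h
    have hB := (hLBmem η).1 hη
    exact ⟨η, hη, (htr η hB.1 hB.2.1).2 hmem⟩

end Aux

/-- Corollary 3.9 (first part): if `(E, ℒ, ℰ)` is strongly cofinal and there are a vertex
`w`, a strictly increasing sequence `l₁ < l₂ < ⋯` of positive integers and paths `βᵢ`
such that each `(βᵢ, [w]_{lᵢ})` is a loop, then every generalized vertex `[v]_l`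
satisfies `[w]_{lᵢ} ⊆ r([v]_l, δ)` for some `i` and some path `δ`; in particular, every
vertex connects to a loop. -/
theorem stmt_9 {V : Type*} {Λ : Type*} [Countable V] [Countable Λ]
    (G : LabeledGraph V Λ) [Countable G.Edge] (hS : G.Standing)
    (hsc : G.StronglyCofinal)
    (w : V) (hw : ∃ e : G.Edge, G.rng e = w)
    (l : ℕ → ℕ) (hmono : StrictMono l) (hpos : ∀ i, 1 ≤ l i)
    (β : ℕ → List Λ) (hloops : ∀ i, G.IsLoop (β i) (G.gv w (l i))) :
    (∀ (v : V) (lv : ℕ), (∃ e : G.Edge, G.rng e = v) → 1 ≤ lv →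
      ∃ (i : ℕ) (δ : List Λ), G.IsLabel δ ∧
        G.gv w (l i) ⊆ G.rel (G.gv v lv) δ) ∧
    G.EveryVertexConnectsToLoop := by
  classical
  obtain ⟨hβ0ne, _, ⟨a₀, ha₀⟩, hsub0⟩ := hloops 0
  have hlen0 : 0 < (β 0).length := List.length_pos_iff.mpr hβ0ne
  set x : ℕ → Λ := fun i => (β 0)[i % (β 0).length]'(Nat.mod_lt i hlen0) with hxdef
  have hx : ∀ i (h : i % (β 0).length < (β 0).length),
      x i = (β 0)[i % (β 0).length] := fun i h => rfl
  have hle : ∀ n, n ≤ l n := by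
    intro n
    induction n with
    | zero => exact Nat.zero_le _
    | succ n ih => exact Nat.succ_le_of_lt (lt_of_le_of_lt ih (hmono (Nat.lt_succ_self n)))
  have hprefix : ∀ n, 1 ≤ n → G.IsLabel (wordPrefix x n) := by
    intro n hn
    have hbig : n < (n + 1) * (β 0).length := by
      have h1 : n + 1 ≤ (n + 1) * (β 0).length := Nat.le_mul_of_pos_right _ hlen0
      omega
    rw [wordPrefix_eq_take x (β 0) hβ0ne hx (n + 1) n (by omega)]
    obtain ⟨s, hs, p⟩ := loop_iter G hsub0 (n + 1) (by omega) a₀ ha₀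
    have hdrop : (wpow (β 0) (n + 1)).drop n ≠ [] := by
      intro h
      have hh := congrArg List.length h
      simp [List.length_drop, wpow_length] at hh
      omega
    have htake : (wpow (β 0) (n + 1)).take n ≠ [] := by
      refine List.length_pos_iff.mp ?_
      rw [List.length_take, wpow_length]
      exact lt_min (by omega) (by omega)
    have p' : G.PathLabel s a₀
        ((wpow (β 0) (n + 1)).take n ++ (wpow (β 0) (n + 1)).drop n) := by
      rw [List.take_append_drop]; exact p
    obtain ⟨z, p1, _⟩ := PathLabel_split G htake hdrop p'
    exact ⟨s, z, p1⟩
  have main : ∀ (v : V) (lv : ℕ), (∃ e : G.Edge, G.rng e = v) → 1 ≤ lv →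
      ∃ (i : ℕ) (δ : List Λ), G.IsLabel δ ∧ G.gv w (l i) ⊆ G.rel (G.gv v lv) δ := by
    intro v lv hv hlv
    obtain ⟨N, hN1, m, lam, hlam, hcov⟩ := hsc x hprefix v lv hv hlv
    have hbig : N < (N + 1) * (β 0).length := by
      have h1 : N + 1 ≤ (N + 1) * (β 0).length := Nat.le_mul_of_pos_right _ hlen0
      omega
    have hpref : wordPrefix x N = (wpow (β 0) (N + 1)).take N :=
      wordPrefix_eq_take x (β 0) hβ0ne hx (N + 1) N (by omega)
    have hτne : (wpow (β 0) (N + 1)).drop N ≠ [] := by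
      intro h
      have hh := congrArg List.length h
      simp [List.length_drop, wpow_length] at hh
      omega
    have htakene : (wpow (β 0) (N + 1)).take N ≠ [] := by
      refine List.length_pos_iff.mp ?_
      rw [List.length_take, wpow_length]
      exact lt_min (by omega) (by omega)
    set τ : List Λ := (wpow (β 0) (N + 1)).drop N with hτdef
    have hcover : ∀ a ∈ G.gv w (l 0), ∃ i : Fin m,
        a ∈ G.rel (G.gv v lv) (lam i ++ τ) := by
      intro a ha
      obtain ⟨s, hs, p⟩ := loop_iter G hsub0 (N + 1) (by omega) a ha
      have p' : G.PathLabel s a ((wpow (β 0) (N + 1)).take N ++ τ) := by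
        rw [hτdef, List.take_append_drop]; exact p
      obtain ⟨z, p1, p2⟩ := PathLabel_split G htakene hτne p'
      have hz : z ∈ G.range' (wordPrefix x N) := by
        rw [hpref]; exact ⟨s, trivial, p1⟩
      have hz2 := hcov hz
      rw [Set.mem_iUnion] at hz2
      obtain ⟨i, q, hq, p3⟩ := hz2
      exact ⟨i, q, hq, PathLabel_append G p3 p2⟩
    set M := (Finset.univ.sup fun i : Fin m => (lam i).length) + τ.length with hMdef
    have hMle : ∀ i : Fin m, (lam i ++ τ).length ≤ M := by
      intro i
      rw [List.length_append, hMdef]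
      exact Nat.add_le_add_right (Finset.le_sup (f := fun i : Fin m => (lam i).length)
        (Finset.mem_univ i)) _
    obtain ⟨_, _, ⟨a, haj⟩, _⟩ := hloops (lv + M)
    have ha0 : a ∈ G.gv w (l 0) := gv_mono G (hmono.monotone (Nat.zero_le _)) haj
    obtain ⟨i₀, hai⟩ := hcover a ha0
    have hδne : lam i₀ ++ τ ≠ [] := by simp [hτne]
    have hIs : G.IsLabel (lam i₀ ++ τ) := by
      obtain ⟨q, hq, p⟩ := hai
      exact ⟨q, a, p⟩
    refine ⟨lv + M, lam i₀ ++ τ, hIs, ?_⟩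
    intro u' hu'
    obtain ⟨ev, hev⟩ := hv
    refine key_transfer G hS ev hev hlv hδne (fun k' hk1 hk2 => ?_) hai
    have hk2' : k' ≤ l (lv + M) := by
      have h1 := hMle i₀
      have h2 := hle (lv + M)
      omega
    have h1 := haj.2 k' hk1 hk2'
    have h2 := hu'.2 k' hk1 hk2'
    rw [h1]
    exact h2.symm
  refine ⟨main, ?_⟩
  intro v lv hlv hv
  obtain ⟨i, δ, hIs, hsub⟩ := main v lv hv hlv
  refine ⟨β i, G.gv w (l i), hloops i, 1, fun _ => δ, fun _ => hIs, ?_, ?_⟩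
  · intro i1 j1 hij _
    exact hij (Subsingleton.elim i1 j1)
  · intro a ha
    exact Set.mem_iUnion.mpr ⟨0, hsub ha⟩
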